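/- Let A be a Lie affgebra and o ∈ A. Define [a,b]_o := [a,b] - [a,o] + [o,o] - [o,b] in the abelian group A_o (with neutral element o). Then [-,-]_o is a Lie bracket on the vector space V(A_o): it is bilinear, antisymmetric ([a,b]_o = -[b,a]_o), and satisfies the Jacobi identity. -/
import Mathlib


/-- An intrinsic affine space over a field `F`: a set with an abelian heap
operation `t` and scaled actions `act λ a b = λ ▷_a b` satisfying the axioms
of Brzeziński–Papworth. -/
structure AffSp (F : Type*) [Field F] (A : Type*) where
  t : A → A → A → A
  act : F → A → A → A
  t_assoc : ∀ a b c d e : A, t (t a b c) d e = t a b (t c d e)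
  t_malcev : ∀ a b : A, t a a b = b
  t_symm : ∀ a b c : A, t a b c = t c b a
  act_heap1 : ∀ (l m n : F) (a b : A),
    act (l - m + n) a b = t (act l a b) (act m a b) (act n a b)
  act_heap2 : ∀ (l : F) (a b c d : A),
    act l a (t b c d) = t (act l a b) (act l a c) (act l a d)
  act_mul : ∀ (l m : F) (a b : A), act (l * m) a b = act l a (act m a b)
  act_one : ∀ a b : A, act 1 a b = b
  act_zero : ∀ a b : A, act 0 a b = a
  base_change : ∀ (l : F) (a b c : A), act l a b = t (act l c b) (act l c a) a

/-- A Lie affgebra: an intrinsic affine space with a bi-affine bracket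
satisfying the affine antisymmetry and affine Jacobi identities. -/
structure LieAffgebra (F : Type*) [Field F] (A : Type*) extends AffSp F A where
  br : A → A → A
  br_left_t : ∀ a b c x : A, br (t a b c) x = t (br a x) (br b x) (br c x)
  br_left_act : ∀ (l : F) (a b x : A), br (act l a b) x = act l (br a x) (br b x)
  br_right_t : ∀ x a b c : A, br x (t a b c) = t (br x a) (br x b) (br x c)
  br_right_act : ∀ (l : F) (x a b : A), br x (act l a b) = act l (br x a) (br x b)
  br_antisym : ∀ a b : A, t (br a b) (br a a) (br b a) = br b b
  br_jacobi : ∀ a b c : A,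
    t (br a (br b c)) (br a a) (t (br b (br c a)) (br b b) (br c (br a b))) = br c c

/-- Let `A` be a Lie affgebra and `o ∈ A`. In the abelian group `A_o`
(with `x + y = ⟨x,o,y⟩`, neutral element `o`, `-x = ⟨o,x,o⟩`, so that
`x - y + z = ⟨x,y,z⟩`), the bracket `[a,b]_o := [a,b] - [a,o] + [o,o] - [o,b]`
is bilinear, antisymmetric and satisfies the Jacobi identity, i.e. it is a
Lie bracket on the vector space `V(A_o)`. -/
theorem lie_affgebra_retract_is_lie_algebra
    {F A : Type*} [Field F] (L : LieAffgebra F A) (o : A) :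
    let add : A → A → A := fun a b => L.t a o b
    let neg : A → A := fun a => L.t o a o
    let smul : F → A → A := fun l a => L.act l o a
    -- `[a,b]_o = [a,b] - [a,o] + [o,o] - [o,b]` in `A_o`
    let bro : A → A → A := fun a b =>
      add (L.t (L.br a b) (L.br a o) (L.br o o)) (neg (L.br o b))
    -- bilinearity
    (∀ a b x : A, bro (add a b) x = add (bro a x) (bro b x)) ∧
    (∀ (l : F) (a x : A), bro (smul l a) x = smul l (bro a x)) ∧
    (∀ a b x : A, bro x (add a b) = add (bro x a) (bro x b)) ∧
    (∀ (l : F) (a x : A), bro x (smul l a) = smul l (bro x a)) ∧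
    -- antisymmetry
    (∀ a b : A, bro a b = neg (bro b a)) ∧
    -- Jacobi identity
    (∀ a b c : A,
      add (bro a (bro b c)) (add (bro b (bro c a)) (bro c (bro a b))) = o) := by
  intro add neg smul bro
  letI : Zero A := ⟨o⟩
  letI : Add A := ⟨fun a b => L.t a o b⟩
  letI : Neg A := ⟨fun a => L.t o a o⟩
  letI : AddCommGroup A :=
    { add := fun a b => L.t a o b
      zero := o
      neg := fun a => L.t o a o
      nsmul := nsmulRec
      zsmul := zsmulRec
      add_assoc := fun a b c => L.t_assoc a o b o c
      zero_add := fun a => L.t_malcev o a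
      add_zero := fun a => (L.t_symm a o o).trans (L.t_malcev o a)
      add_comm := fun a b => L.t_symm a o b
      neg_add_cancel := fun a => by
        show L.t (L.t o a o) o a = o
        rw [L.t_assoc, L.t_malcev, L.t_symm, L.t_malcev] }
  have ht : ∀ x y z : A, L.t x y z = x - y + z := by
    intro x y z
    show L.t x y z = L.t (L.t x o (L.t o y o)) o z
    rw [← L.t_assoc x o o y o, show L.t x o o = x from (L.t_symm x o o).trans (L.t_malcev o x),
      L.t_assoc, L.t_malcev]
  have h0 : ∀ l : F, L.act l o o = o := by
    intro l
    have h := L.act_mul l 0 o o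
    rw [mul_zero, L.act_zero] at h
    exact h.symm
  letI : SMul F A := ⟨fun l a => L.act l o a⟩
  letI : Module F A :=
    { smul := fun l a => L.act l o a
      one_smul := fun a => L.act_one o a
      mul_smul := fun l m a => L.act_mul l m o a
      smul_zero := fun l => h0 l
      smul_add := fun l a b => by
        show L.act l o (L.t a o b) = L.t (L.act l o a) o (L.act l o b)
        rw [L.act_heap2, h0]
      add_smul := fun l m a => by
        show L.act (l + m) o a = L.t (L.act l o a) o (L.act m o a)
        rw [show l + m = l - 0 + m by ring, L.act_heap1, L.act_zero]
      zero_smul := fun a => L.act_zero o a }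
  have hs : ∀ (l : F) (v : A), L.act l o v = l • v := fun _ _ => rfl
  have hact : ∀ (l : F) (u v : A), L.act l u v = l • v - l • u + u := by
    intro l u v
    rw [L.base_change l u v o, ht, hs, hs]
  refine ⟨?_, ?_, ?_, ?_, ?_, ?_⟩
  · intro a b x
    simp only [bro, add, neg, smul]
    simp only [L.br_left_t]
    simp only [ht]
    abel
  · intro l a x
    simp only [bro, add, neg, smul]
    simp only [L.br_left_act]
    simp only [hs]
    simp only [hact]
    simp only [ht]
    simp only [show o = (0:A) from rfl]
    module
  · intro a b x
    simp only [bro, add, neg, smul]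
    simp only [L.br_right_t]
    simp only [ht]
    abel
  · intro l a x
    simp only [bro, add, neg, smul]
    simp only [L.br_right_act]
    simp only [hs]
    simp only [hact]
    simp only [ht]
    simp only [show o = (0:A) from rfl]
    module
  · intro a b
    simp only [bro, add, neg, smul]
    simp only [ht]
    have hA : ∀ x y : A, L.br x y - L.br x x + L.br y x = L.br y y := by
      intro x y
      have h := L.br_antisym x y
      rwa [ht] at h
    have key : ((L.br a b - L.br a a + L.br b a) - L.br b b)
        - ((L.br a o - L.br a a + L.br o a) - L.br o o)
        - ((L.br o b - L.br o o + L.br b o) - L.br b b) = (0 : A) := by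
      rw [hA a b, hA a o, hA o b]; abel
    rw [← sub_eq_zero, ← key]
    abel
  · intro a b c
    simp only [bro, add, neg, smul]
    simp only [L.br_right_t]
    simp only [ht]
    have hJ : ∀ x y z : A, L.br x (L.br y z) - L.br x x
        + (L.br y (L.br z x) - L.br y y + L.br z (L.br x y)) = L.br z z := by
      intro x y z
      have h := L.br_jacobi x y z
      rwa [ht, ht] at h
    have key : ((L.br a (L.br b c) - L.br a a
          + (L.br b (L.br c a) - L.br b b + L.br c (L.br a b))) - L.br c c)
        - ((L.br a (L.br b o) - L.br a a
          + (L.br b (L.br o a) - L.br b b + L.br o (L.br a b))) - L.br o o)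
        - ((L.br a (L.br o c) - L.br a a
          + (L.br o (L.br c a) - L.br o o + L.br c (L.br a o))) - L.br c c)
        + ((L.br a (L.br o o) - L.br a a
          + (L.br o (L.br o a) - L.br o o + L.br o (L.br a o))) - L.br o o)
        - ((L.br b (L.br c o) - L.br b b
          + (L.br c (L.br o b) - L.br c c + L.br o (L.br b c))) - L.br o o)
        + ((L.br b (L.br o o) - L.br b b
          + (L.br o (L.br o b) - L.br o o + L.br o (L.br b o))) - L.br o o)
        + ((L.br c (L.br o o) - L.br c c
          + (L.br o (L.br o c) - L.br o o + L.br o (L.br c o))) - L.br o o)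
        - ((L.br o (L.br o o) - L.br o o
          + (L.br o (L.br o o) - L.br o o + L.br o (L.br o o))) - L.br o o) = (0 : A) := by
      rw [hJ a b c, hJ a b o, hJ a o c, hJ a o o, hJ b c o, hJ b o o, hJ c o o, hJ o o o]
      abel
    rw [← sub_eq_zero, ← key]
    abel
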